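/- Let f(t) = max_{i ∈ [K]} μ̂_{i,t} be the highest empirical mean maintained by the user at time t. Then for any round r of Algorithm 1 (Phase-1 Sweeping), denoted by the time interval [t_s^{(r)}, t_e^{(r)}] (a round starts with candidate set F = {1,…,K} and ends when every arm has been rejected once within the round), one has f(t_e^{(r)}) ≤ f(t_s^{(r)}) − 2·√( Γ̲^{(r)} / n(t_e^{(r)}) ), where Γ̲^{(r)} = min_{t ∈ [t_s^{(r)}, t_e^{(r)}]} Γ(t). -/

import Mathlib

open MeasureTheory ProbabilityTheory Finset

noncomputable section

/-- A trace of the sequential interaction between the recommender system and the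
user: at each time `t` (and in each sample point `ω`) the system recommends the
arm `arm t ω`, the user accepts it iff `acc t ω = true`; `n i t ω` is the number
of acceptances of arm `i` before time `t`, `emp i t ω` is the user's empirical
mean of the rewards of arm `i` collected before time `t`, and `rho t ω` is the
user's (possibly history-dependent) confidence parameter `ρ_t`. -/
structure Trace (K : ℕ) (Ω : Type*) where
  arm : ℕ → Ω → Fin K
  acc : ℕ → Ω → Bool
  n : Fin K → ℕ → Ω → ℕ
  emp : Fin K → ℕ → Ω → ℝ
  rho : ℕ → Ω → ℝ

namespace Trace

variable {K : ℕ} {Ω : Type*} (T : Trace K Ω)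

/-- `n(t)`: total number of accepted recommendations before time `t`. -/
def ntot (t : ℕ) (ω : Ω) : ℕ := ∑ i, T.n i t ω

/-- The user's confidence-width function `Γ(t) = max{0, 2α log(ρ_t · n(t))}`. -/
def gam (α : ℝ) (t : ℕ) (ω : Ω) : ℝ :=
  max 0 (2 * α * Real.log (T.rho t ω * (T.ntot t ω : ℝ)))

/-- Upper confidence bound `ucb_{i,t} = μ̂_{i,t} + √(Γ(t)/n_i^t)`. -/
def ucb (α : ℝ) (i : Fin K) (t : ℕ) (ω : Ω) : ℝ :=
  T.emp i t ω + Real.sqrt (T.gam α t ω / (T.n i t ω : ℝ))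

/-- Lower confidence bound `lcb_{i,t} = μ̂_{i,t} − √(Γ(t)/n_i^t)`. -/
def lcb (α : ℝ) (i : Fin K) (t : ℕ) (ω : Ω) : ℝ :=
  T.emp i t ω - Real.sqrt (T.gam α t ω / (T.n i t ω : ℝ))

/-- Number of rejected recommendations before time `t`. -/
def rejCount (t : ℕ) (ω : Ω) : ℕ :=
  ((Finset.range t).filter fun u => T.acc u ω = false).card

/-- The dynamics of the interaction: acceptance counts start at `0` and increase by
one exactly at accepted recommendations of the corresponding arm; the empirical
mean of an arm is updated, using the reward stream `r` (where `r i k` is the reward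
the user observes at the `(k+1)`-st acceptance of arm `i`), exactly at accepted
recommendations of that arm; the confidence parameter stays in `[ρ₀, ρ₁]`; and the
user follows the confidence-interval decision rule: a recommended arm is rejected
iff some other arm's lower confidence bound is at least the recommended arm's upper
confidence bound (an arm that was never accepted has an infinite confidence
interval, so it is never rejected and never causes a rejection). -/
def Dynamics (α ρ₀ ρ₁ : ℝ) (r : Fin K → ℕ → Ω → ℝ) : Prop :=
  (∀ i ω, T.n i 0 ω = 0) ∧
  (∀ i t ω, T.n i (t + 1) ω =
      T.n i t ω + if T.arm t ω = i ∧ T.acc t ω = true then 1 else 0) ∧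
  (∀ i t ω, T.emp i (t + 1) ω =
      if T.arm t ω = i ∧ T.acc t ω = true then
        ((T.n i t ω : ℝ) * T.emp i t ω + r i (T.n i t ω) ω) / ((T.n i t ω : ℝ) + 1)
      else T.emp i t ω) ∧
  (∀ t ω, T.rho t ω ∈ Set.Icc ρ₀ ρ₁) ∧
  (∀ t ω, T.acc t ω = false ↔
      ∃ j : Fin K, j ≠ T.arm t ω ∧ 0 < T.n j t ω ∧ 0 < T.n (T.arm t ω) t ω ∧
        T.ucb α (T.arm t ω) t ω ≤ T.lcb α j t ω)

/-- The time interval `[ts, te]` is one round of Phase-1 Sweeping (Algorithm 1) in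
the sample point `ω`: the arms `0, 1, …, K−1` are rejected successively, in order,
at times `rt 0 < rt 1 < ⋯ < rt (K−1) = te` in `[ts, te]`; every other
recommendation in the round is accepted; and at any time of the round the
recommended arm has not yet been rejected in the round while all lower-indexed arms
already have been (i.e. each arm is recommended repeatedly until it is rejected,
after which the system moves to the next arm). -/
def IsRound (ω : Ω) (ts te : ℕ) : Prop :=
  ∃ rt : Fin K → ℕ, StrictMono rt ∧ (∀ i, ts ≤ rt i) ∧ (∀ i, rt i ≤ te) ∧
    (∃ i, rt i = te) ∧
    (∀ i, T.arm (rt i) ω = i ∧ T.acc (rt i) ω = false) ∧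
    (∀ u, ts ≤ u → u ≤ te → (∀ i, u ≠ rt i) → T.acc u ω = true) ∧
    (∀ u, ts ≤ u → u ≤ te →
      u ≤ rt (T.arm u ω) ∧ ∀ j : Fin K, j < T.arm u ω → rt j < u)

/-- Description of a run of Phase-1 Sweeping (Algorithm 1) with acceptance budget
`N₁`: `t₀ ω` is the end of the initialization stage; the main loop performs `M ω`
completed rounds `[ts r, te r]` (each round starting right after the previous one
ends), the first of which starts after both the initialization stage and time
`e^{1/(2α)}(K+1)/ρ₀`; `Tend ω` is the termination time of Phase-1, namely the
first time at which the total number of acceptances reaches `N₁`; every completed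
round ends before termination; the number of rejections incurred before the first
indexed round is at most `max{K, e^{1/(2α)}·K/ρ₀}`; in the (possibly incomplete)
round in progress at termination each arm is rejected at most once; and the
algorithm collects at least `⌊t/(K+1)⌋` acceptances in its first `t` steps. -/
def Phase1 (α ρ₀ N₁ : ℝ) (t₀ M : Ω → ℕ) (ts te : ℕ → Ω → ℕ) (Tend : Ω → ℕ) : Prop :=
  (∀ ω, (t₀ ω : ℝ) ≤ (ts 0 ω : ℝ) ∧
      Real.exp (1 / (2 * α)) * ((K : ℝ) + 1) / ρ₀ ≤ (ts 0 ω : ℝ)) ∧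
  (∀ ω r, r < M ω → T.IsRound ω (ts r ω) (te r ω)) ∧
  (∀ ω r, ts (r + 1) ω = te r ω + 1) ∧
  (∀ ω r, r < M ω → te r ω < Tend ω) ∧
  (∀ ω, N₁ ≤ (T.ntot (Tend ω) ω : ℝ) ∧ ∀ u, u < Tend ω → (T.ntot u ω : ℝ) < N₁) ∧
  (∀ ω, (T.rejCount (ts 0 ω) ω : ℝ) ≤
      max (K : ℝ) (Real.exp (1 / (2 * α)) * (K : ℝ) / ρ₀)) ∧
  (∀ ω (i : Fin K), ((Finset.Ico (ts (M ω) ω) (Tend ω)).filter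
      fun u => T.arm u ω = i ∧ T.acc u ω = false).card ≤ 1) ∧
  (∀ ω t, t ≤ Tend ω → t / (K + 1) ≤ T.ntot t ω)

/-- Description of a run of Phase-2 Elimination (Algorithm 2) started at time
`T1`: the candidate set `F` starts as the full arm set; as long as more than one
candidate remains, the system recommends an arm with the minimum acceptance count
among all arms, and the recommended arm is removed from the candidate set iff it
is rejected; once a single candidate remains, the candidate set stays fixed. -/
def Phase2 (T1 : Ω → ℕ) (F : ℕ → Ω → Finset (Fin K)) : Prop :=
  (∀ ω, F (T1 ω) ω = Finset.univ) ∧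
  (∀ ω t, T1 ω ≤ t → 1 < (F t ω).card → ∀ j, T.n (T.arm t ω) t ω ≤ T.n j t ω) ∧
  (∀ ω t, T1 ω ≤ t → F (t + 1) ω =
      if 1 < (F t ω).card ∧ T.acc t ω = false then (F t ω).erase (T.arm t ω)
      else F t ω)

end Trace

/-- The reward model: `r i k` is the reward the user observes at the `(k+1)`-st
acceptance of arm `i`; all these rewards are measurable, mutually independent, and
each `r i k` is `1`-sub-Gaussian with mean `μ i` (and in particular has mean
`μ i`). -/
def RewardModel {K : ℕ} {Ω : Type*} [MeasurableSpace Ω] (P : Measure Ω)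
    (μ : Fin K → ℝ) (r : Fin K → ℕ → Ω → ℝ) : Prop :=
  (∀ i k, Measurable (r i k)) ∧
  iIndepFun (fun p : Fin K × ℕ => r p.1 p.2) P ∧
  (∀ i k, ∫ ω, r i k ω ∂P = μ i) ∧
  (∀ (i : Fin K) (k : ℕ) (l : ℝ),
    ∫ ω, Real.exp (l * (r i k ω - μ i)) ∂P ≤ Real.exp (l ^ 2 / 2))

/-- Lemma `lm:Er`: let `f(t) = max_i μ̂_{i,t}` be the highest
empirical mean maintained by the user.  For any round `[ts, te]` of Phase-1
Sweeping (a deterministic consequence of the decision rule, holding for every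
realization `r` of the rewards, here over the trivial sample space `Unit`),
`f(te) ≤ f(ts) − 2√(Γ̲/n(te))`, where `Γ̲ = min_{t ∈ [ts, te]} Γ(t)`. -/
theorem round_decreases_max_empirical_mean
    (K : ℕ) [NeZero K] (α ρ₀ ρ₁ : ℝ) (hα : 0 < α) (hρ₀ : 0 < ρ₀) (hρ : ρ₀ ≤ ρ₁)
    (r : Fin K → ℕ → Unit → ℝ) (T : Trace K Unit)
    (hdyn : T.Dynamics α ρ₀ ρ₁ r)
    (ts te : ℕ) (hts : ts ≤ te)
    (hround : T.IsRound () ts te)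
    (hcount : ∀ i : Fin K, 0 < T.n i ts ()) :
    (Finset.univ.sup' Finset.univ_nonempty fun i : Fin K => T.emp i te ()) ≤
      (Finset.univ.sup' Finset.univ_nonempty fun i : Fin K => T.emp i ts ()) -
        2 * Real.sqrt
          (((Finset.Icc ts te).inf' (Finset.nonempty_Icc.mpr hts) fun t => T.gam α t ()) /
            (T.ntot te () : ℝ)) := by
  classical
  obtain ⟨hn0, hnstep, hempstep, hrho, hrule⟩ := hdyn
  obtain ⟨rt, hmono, hrts, hrte, ⟨ilast, hilast⟩, hrej, hacc, hstruct⟩ := hround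
  -- monotonicity of counts
  have hnmono : ∀ (i : Fin K), Monotone fun t => T.n i t () := by
    intro i
    apply monotone_nat_of_le_succ
    intro t
    rw [hnstep i t ()]
    exact Nat.le_add_right _ _
  have hle_tot : ∀ (i : Fin K) (t : ℕ), T.n i t () ≤ T.ntot t () := by
    intro i t
    unfold Trace.ntot
    exact Finset.single_le_sum (f := fun j => T.n j t ()) (fun j _ => Nat.zero_le _) (Finset.mem_univ i)
  have htotmono : Monotone fun t => T.ntot t () := by
    intro s t hst
    exact Finset.sum_le_sum fun i _ => hnmono i hst
  obtain ⟨i0⟩ : Nonempty (Fin K) := Finset.univ_nonempty.to_type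
  have htotpos : 0 < T.ntot te () :=
    lt_of_lt_of_le (hcount i0) (le_trans (le_trans (hle_tot i0 ts) (htotmono hts)) le_rfl)
  -- notation
  set fts := (Finset.univ.sup' Finset.univ_nonempty fun i : Fin K => T.emp i ts ()) with hfts
  set Γm := ((Finset.Icc ts te).inf' (Finset.nonempty_Icc.mpr hts) fun t => T.gam α t ()) with hΓm
  set δ := Real.sqrt (Γm / (T.ntot te () : ℝ)) with hδ
  have hΓnonneg : 0 ≤ Γm := by
    apply Finset.le_inf'
    intro t _
    exact le_max_left _ _
  have hδnonneg : 0 ≤ δ := Real.sqrt_nonneg _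
  -- the basic width bound
  have hwidth : ∀ t, ts ≤ t → t ≤ te → ∀ i : Fin K, 0 < T.n i t () →
      δ ≤ Real.sqrt (T.gam α t () / (T.n i t () : ℝ)) := by
    intro t ht1 ht2 i hpos
    apply Real.sqrt_le_sqrt
    apply div_le_div₀ (le_trans hΓnonneg ?_) ?_ ?_ ?_
    · exact Finset.inf'_le _ (Finset.mem_Icc.mpr ⟨ht1, ht2⟩)
    · exact Finset.inf'_le _ (Finset.mem_Icc.mpr ⟨ht1, ht2⟩)
    · exact_mod_cast hpos
    · exact_mod_cast le_trans (hle_tot i t) (htotmono ht2)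
  -- empirical means are constant when an arm is not accepted
  have hempconst : ∀ (j : Fin K) (a b : ℕ), a ≤ b →
      (∀ v, a ≤ v → v < b → ¬(T.arm v () = j ∧ T.acc v () = true)) →
      T.emp j b () = T.emp j a () := by
    intro j a b hab hno
    induction b with
    | zero =>
      have ha0 : a = 0 := Nat.le_zero.mp hab
      rw [ha0]
    | succ b ih =>
      rcases Nat.lt_or_ge a (b+1) with h | h
      · have hab' : a ≤ b := by omega
        rw [hempstep j b (), if_neg (hno b hab' (by omega))]
        exact ih hab' (fun v hv1 hv2 => hno v hv1 (by omega))
      · have : a = b + 1 := by omega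
        rw [this]
  -- arm i is never (successfully) recommended after rt i within the round
  have hfrozen : ∀ (i : Fin K) (u : ℕ), rt i ≤ u → u ≤ te →
      T.emp i u () = T.emp i (rt i) () := by
    intro i u h1 h2
    apply hempconst i (rt i) u h1
    intro v hv1 hv2 ⟨ha, hac⟩
    rcases eq_or_lt_of_le hv1 with h | h
    · rw [← h] at hac
      rw [(hrej i).2] at hac
      exact Bool.false_ne_true hac
    · have hv : v ≤ rt (T.arm v ()) :=
        (hstruct v (le_trans (hrts i) (le_of_lt h)) (le_trans (le_of_lt hv2) h2)).1
      rw [ha] at hv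
      omega
  -- arm j > i keeps its ts-value until rt i
  have hlater : ∀ (i j : Fin K), i < j →
      T.emp j (rt i) () = T.emp j ts () := by
    intro i j hij
    apply hempconst j ts (rt i) (hrts i)
    intro v hv1 hv2 ⟨ha, hac⟩
    have hv : ∀ k : Fin K, k < T.arm v () → rt k < v :=
      (hstruct v hv1 (le_trans (le_of_lt hv2) (hrte i))).2
    rw [ha] at hv
    exact absurd (hv i hij) (by omega)
  have hftsle : ∀ j : Fin K, T.emp j ts () ≤ fts := by
    intro j
    rw [hfts]
    exact Finset.le_sup' (fun i => T.emp i ts ()) (Finset.mem_univ j)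
  -- main induction
  have main : ∀ m : ℕ, ∀ i : Fin K, (i : ℕ) ≤ m → T.emp i (rt i) () ≤ fts - 2 * δ := by
    intro m
    induction m with
    | zero =>
      intro i hi
      obtain ⟨j, hji, hnj, hni, hucb⟩ := (hrule (rt i) ()).mp (hrej i).2
      rw [(hrej i).1] at hji hni hucb
      have hij : i < j := by
        rcases lt_or_gt_of_ne hji with h | h
        · exact absurd (Fin.le_def.mp (Fin.le_of_lt h)) (by omega)
        · exact h
      have h1 : δ ≤ Real.sqrt (T.gam α (rt i) () / (T.n i (rt i) () : ℝ)) :=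
        hwidth (rt i) (hrts i) (hrte i) i hni
      have h2 : δ ≤ Real.sqrt (T.gam α (rt i) () / (T.n j (rt i) () : ℝ)) :=
        hwidth (rt i) (hrts i) (hrte i) j hnj
      have hucb' : T.emp i (rt i) () + Real.sqrt (T.gam α (rt i) () / (T.n i (rt i) () : ℝ))
          ≤ T.emp j (rt i) () - Real.sqrt (T.gam α (rt i) () / (T.n j (rt i) () : ℝ)) := hucb
      have hje : T.emp j (rt i) () = T.emp j ts () := hlater i j hij
      have := hftsle j
      linarith
    | succ m ih =>
      intro i hi
      obtain ⟨j, hji, hnj, hni, hucb⟩ := (hrule (rt i) ()).mp (hrej i).2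
      rw [(hrej i).1] at hji hni hucb
      have h1 : δ ≤ Real.sqrt (T.gam α (rt i) () / (T.n i (rt i) () : ℝ)) :=
        hwidth (rt i) (hrts i) (hrte i) i hni
      have h2 : δ ≤ Real.sqrt (T.gam α (rt i) () / (T.n j (rt i) () : ℝ)) :=
        hwidth (rt i) (hrts i) (hrte i) j hnj
      have hucb' : T.emp i (rt i) () + Real.sqrt (T.gam α (rt i) () / (T.n i (rt i) () : ℝ))
          ≤ T.emp j (rt i) () - Real.sqrt (T.gam α (rt i) () / (T.n j (rt i) () : ℝ)) := hucb
      rcases lt_or_gt_of_ne hji with h | h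
      · -- j < i : j already rejected, emp j frozen at rt j
        have hje : T.emp j (rt i) () = T.emp j (rt j) () :=
          hfrozen j (rt i) (le_of_lt (hmono h)) (hrte i)
        have hjv : (j : ℕ) ≤ m := by
          have := Fin.lt_def.mp h
          omega
        have := ih j hjv
        linarith
      · have hje : T.emp j (rt i) () = T.emp j ts () := hlater i j h
        have := hftsle j
        linarith
  -- conclude
  apply Finset.sup'_le
  intro i _
  have h1 : T.emp i te () = T.emp i (rt i) () := hfrozen i te (hrte i) le_rfl
  rw [h1]
  exact main (i : ℕ) i le_rfl
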